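/- For λ ∈ ℝ, r a nonnegative integer, every nonnegative integer n, and every real x, the extended degenerate Bell polynomial satisfies Bel^{(r)}_{n,λ}(x) = Σ_{m=0}^{n} λ^{n−m} S_1(n,m) Σ_{k=0}^{n} (x^k/k!) Δ^k r^m, where Δ^k r^m = Σ_{l=0}^{k} C(k,l) (−1)^{k−l} (l+r)^m. -/

import Mathlib

open Finset

/-- The degenerate falling factorial `(x|λ)_n = x(x-λ)(x-2λ)⋯(x-(n-1)λ)`. -/
noncomputable def degFall (x lam : ℝ) (n : ℕ) : ℝ := ∏ i ∈ Finset.range n, (x - i * lam)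

/-- The formal power series `(1+λt)^{y/λ} = Σ_{m=0}^∞ (y|λ)_m t^m/m!`. -/
noncomputable def degExp (lam y : ℝ) : PowerSeries ℝ :=
  PowerSeries.mk fun m => degFall y lam m / m.factorial

/-- The degenerate Stirling numbers of the second kind `S_{2,λ}(n,k)`, defined by
`(1/k!)((1+λt)^{1/λ} - 1)^k = Σ_{n=k}^∞ S_{2,λ}(n,k) t^n/n!`. -/
noncomputable def degStirling2 (lam : ℝ) (n k : ℕ) : ℝ :=
  (n.factorial : ℝ) *
    PowerSeries.coeff n (((k.factorial : ℝ))⁻¹ • (degExp lam 1 - 1) ^ k)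

/-- The extended degenerate Stirling numbers of the second kind `S_{2,r}(n+r,k+r|λ)`,
defined by `(1/k!)(1+λt)^{r/λ}((1+λt)^{1/λ} - 1)^k = Σ_{n=k}^∞ S_{2,r}(n+r,k+r|λ) t^n/n!`. -/
noncomputable def extDegStirling2 (lam : ℝ) (r n k : ℕ) : ℝ :=
  (n.factorial : ℝ) *
    PowerSeries.coeff n
      (((k.factorial : ℝ))⁻¹ • (degExp lam r * (degExp lam 1 - 1) ^ k))

/-- The exponential `e^f = Σ_{k=0}^∞ f^k / k!` of a formal power series, computed
coefficientwise (the coefficientwise sums converge when `f` has zero constant term). -/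
noncomputable def expComp (f : PowerSeries ℝ) : PowerSeries ℝ :=
  PowerSeries.mk fun n => ∑' k : ℕ, PowerSeries.coeff n (f ^ k) / k.factorial

/-- The degenerate Bell polynomials, defined by
`e^{x((1+λt)^{1/λ} - 1)} = Σ_{n=0}^∞ Bel_{n,λ}(x) t^n/n!`. -/
noncomputable def degBell (lam x : ℝ) (n : ℕ) : ℝ :=
  (n.factorial : ℝ) * PowerSeries.coeff n (expComp (x • (degExp lam 1 - 1)))

/-- The extended degenerate Bell polynomials, defined by
`(1+λt)^{r/λ} e^{x((1+λt)^{1/λ} - 1)} = Σ_{n=0}^∞ Bel^{(r)}_{n,λ}(x) t^n/n!`. -/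
noncomputable def extDegBell (lam : ℝ) (r : ℕ) (x : ℝ) (n : ℕ) : ℝ :=
  (n.factorial : ℝ) *
    PowerSeries.coeff n (degExp lam r * expComp (x • (degExp lam 1 - 1)))

/-- The signed Stirling numbers of the first kind `S_1(n,k)`, defined by
`(x)_n = x(x-1)⋯(x-n+1) = Σ_{k=0}^n S_1(n,k) x^k`. -/
noncomputable def stirling1 (n k : ℕ) : ℝ :=
  (∏ i ∈ Finset.range n, (Polynomial.X - Polynomial.C (i : ℝ))).coeff k

/-- The Stirling numbers of the second kind, defined by
`(1/k!)(e^t - 1)^k = Σ_{n=k}^∞ S_2(n,k) t^n/n!`. -/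
noncomputable def stirling2 (n k : ℕ) : ℝ :=
  (n.factorial : ℝ) *
    PowerSeries.coeff n (((k.factorial : ℝ))⁻¹ • (PowerSeries.exp ℝ - 1) ^ k)

/-- The r-Stirling numbers of the second kind `S_{2,r}(n+r,k+r)`, defined by
`e^{rt}(1/k!)(e^t - 1)^k = Σ_{n=0}^∞ S_{2,r}(n+r,k+r) t^n/n!`. -/
noncomputable def rStirling2 (r n k : ℕ) : ℝ :=
  (n.factorial : ℝ) *
    PowerSeries.coeff n
      (PowerSeries.rescale (r : ℝ) (PowerSeries.exp ℝ) *
        ((k.factorial : ℝ))⁻¹ • (PowerSeries.exp ℝ - 1) ^ k)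

/-- The ordinary falling factorial `(x)_k = x(x-1)⋯(x-k+1)`. -/
noncomputable def fallFact (x : ℝ) (k : ℕ) : ℝ := ∏ i ∈ Finset.range k, (x - i)

lemma degFall_succ (y lam : ℝ) (n : ℕ) :
    degFall y lam (n+1) = degFall y lam n * (y - n * lam) := prod_range_succ _ _

lemma degFall_add (lam a b : ℝ) (n : ℕ) :
    degFall (a + b) lam n =
      ∑ j ∈ range (n+1), (n.choose j : ℝ) * degFall a lam j * degFall b lam (n - j) := by
  induction n with
  | zero => simp [degFall]
  | succ n ih =>
    rw [degFall_succ, ih, sum_mul]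
    have key : ∀ j ∈ range (n+1),
        (n.choose j : ℝ) * degFall a lam j * degFall b lam (n - j) * (a + b - n * lam)
        = (n.choose j : ℝ) * (degFall a lam (j+1) * degFall b lam (n-j))
          + (n.choose j : ℝ) * (degFall a lam j * degFall b lam ((n+1)-j)) := by
      intro j hj
      rw [mem_range, Nat.lt_succ_iff] at hj
      have h1 := degFall_succ a lam j
      have h2 := degFall_succ b lam (n-j)
      have hnj : (n+1) - j = (n - j) + 1 := by omega
      have hcast : ((n - j : ℕ) : ℝ) = (n : ℝ) - j := by
        rw [Nat.cast_sub hj]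
      rw [h1, hnj, h2, hcast]
      ring
    rw [sum_congr rfl key, sum_add_distrib]
    have e1 : ∑ j ∈ range (n+1), (n.choose j : ℝ) * (degFall a lam j * degFall b lam ((n+1)-j))
        = ∑ j ∈ range (n+2), (n.choose j : ℝ) * (degFall a lam j * degFall b lam ((n+1)-j)) := by
      rw [sum_range_succ (n := n+1)]
      simp
    rw [e1, sum_range_succ' _ (n+1)]
    conv_rhs => rw [sum_range_succ' _ (n+1)]
    simp only [Nat.choose_succ_succ, Nat.cast_add, Nat.choose_zero_right, Nat.cast_one,
      Nat.sub_zero, Nat.succ_sub_succ_eq_sub, add_mul, one_mul, mul_assoc, Nat.succ_eq_add_one]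
    rw [sum_add_distrib]
    ring

lemma degExp_mul (lam a b : ℝ) : degExp lam a * degExp lam b = degExp lam (a + b) := by
  ext n
  rw [PowerSeries.coeff_mul, Finset.Nat.sum_antidiagonal_eq_sum_range_succ_mk]
  simp only [degExp, PowerSeries.coeff_mk]
  rw [degFall_add, sum_div]
  refine sum_congr rfl fun j hj => ?_
  rw [mem_range, Nat.lt_succ_iff] at hj
  have hfac : (n.factorial : ℝ) = (n.choose j) * j.factorial * (n-j).factorial := by
    rw [← Nat.choose_mul_factorial_mul_factorial hj]; push_cast; ring
  have h1 : (j.factorial : ℝ) ≠ 0 := Nat.cast_ne_zero.mpr j.factorial_ne_zero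
  have h2 : ((n-j).factorial : ℝ) ≠ 0 := Nat.cast_ne_zero.mpr (n-j).factorial_ne_zero
  have h3 : (n.factorial : ℝ) ≠ 0 := Nat.cast_ne_zero.mpr n.factorial_ne_zero
  field_simp
  rw [hfac]; ring

lemma degExp_zero (lam : ℝ) : degExp lam 0 = 1 := by
  ext n
  cases n with
  | zero => simp [degExp, degFall]
  | succ n =>
    simp only [degExp, PowerSeries.coeff_mk, PowerSeries.coeff_one, Nat.succ_ne_zero, if_false]
    have : degFall 0 lam (n+1) = 0 := by
      unfold degFall
      apply Finset.prod_eq_zero (i := 0) (by simp)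
      simp
    rw [this, zero_div]

lemma degExp_pow (lam : ℝ) (l : ℕ) : (degExp lam 1) ^ l = degExp lam l := by
  induction l with
  | zero => rw [pow_zero, Nat.cast_zero, degExp_zero]
  | succ l ih =>
    rw [pow_succ, ih, degExp_mul]
    push_cast
    ring_nf

lemma coeff_pow_eq_zero {f : PowerSeries ℝ} (hf : PowerSeries.constantCoeff f = 0)
    {n k : ℕ} (h : n < k) : PowerSeries.coeff n (f ^ k) = 0 := by
  obtain ⟨g, rfl⟩ := PowerSeries.X_dvd_iff.mpr hf
  rw [mul_pow, PowerSeries.coeff_X_pow_mul', if_neg (by omega)]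

lemma coeff_expComp {f : PowerSeries ℝ} (hf : PowerSeries.constantCoeff f = 0)
    {j n : ℕ} (hj : j ≤ n) :
    PowerSeries.coeff j (expComp f)
      = ∑ k ∈ range (n+1), PowerSeries.coeff j (f ^ k) / k.factorial := by
  rw [expComp, PowerSeries.coeff_mk]
  apply tsum_eq_sum
  intro k hk
  rw [mem_range, not_lt] at hk
  rw [coeff_pow_eq_zero hf (by omega), zero_div]

lemma coeff_mul_expComp (p : PowerSeries ℝ) {f : PowerSeries ℝ}
    (hf : PowerSeries.constantCoeff f = 0) (n : ℕ) :
    PowerSeries.coeff n (p * expComp f)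
      = ∑ k ∈ range (n+1), PowerSeries.coeff n (p * f ^ k) / k.factorial := by
  rw [PowerSeries.coeff_mul]
  have h : ∀ ij ∈ Finset.HasAntidiagonal.antidiagonal n,
      PowerSeries.coeff ij.1 p * PowerSeries.coeff ij.2 (expComp f)
      = ∑ k ∈ range (n+1),
          PowerSeries.coeff ij.1 p * PowerSeries.coeff ij.2 (f ^ k) / k.factorial := by
    intro ij hij
    rw [Finset.HasAntidiagonal.mem_antidiagonal] at hij
    rw [coeff_expComp hf (n := n) (by omega), mul_sum]
    simp [mul_div_assoc]
  rw [sum_congr rfl h, sum_comm]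
  refine sum_congr rfl fun k _ => ?_
  rw [PowerSeries.coeff_mul, sum_div]

lemma stirling1_eq_zero {n k : ℕ} (h : n < k) : stirling1 n k = 0 := by
  unfold stirling1
  apply Polynomial.coeff_eq_zero_of_natDegree_lt
  calc (∏ i ∈ Finset.range n, (Polynomial.X - Polynomial.C (i : ℝ))).natDegree
      ≤ ∑ i ∈ Finset.range n, (Polynomial.X - Polynomial.C (i : ℝ)).natDegree :=
        Polynomial.natDegree_prod_le _ _
    _ ≤ ∑ i ∈ Finset.range n, 1 := by
        apply sum_le_sum
        intro i _
        exact Polynomial.natDegree_X_sub_C_le _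
    _ = n := by simp
    _ < k := h

lemma degFall_eq_sum (y lam : ℝ) (n : ℕ) :
    degFall y lam n = ∑ m ∈ range (n+1), lam ^ (n-m) * stirling1 n m * y ^ m := by
  induction n with
  | zero => simp [degFall, stirling1]
  | succ n ih =>
    have hs0 : stirling1 (n+1) 0 = -(n:ℝ) * stirling1 n 0 := by
      unfold stirling1
      rw [prod_range_succ, Polynomial.mul_coeff_zero]
      simp [mul_comm]
    have hs : ∀ m : ℕ, stirling1 (n+1) (m+1) = stirling1 n m - (n:ℝ) * stirling1 n (m+1) := by
      intro m
      unfold stirling1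
      rw [prod_range_succ, Polynomial.coeff_mul_X_sub_C]
      ring
    rw [degFall_succ, ih, sum_range_succ' _ (n+1)]
    simp only [hs, hs0, Nat.succ_sub_succ_eq_sub, Nat.sub_zero, pow_zero]
    rw [sum_mul]
    have key : ∀ m ∈ range (n+1),
        lam ^ (n-m) * stirling1 n m * y ^ m * (y - n * lam)
        = lam ^ (n-m) * stirling1 n m * y ^ (m+1)
          - (n:ℝ) * (lam ^ (n-m+1) * stirling1 n m * y ^ m) := by
      intro m hm
      ring
    rw [sum_congr rfl key, sum_sub_distrib]
    have e2 : ∑ m ∈ range (n+1), (n:ℝ) * (lam ^ (n-m+1) * stirling1 n m * y ^ m)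
        = ∑ m ∈ range n, (n:ℝ) * (lam ^ (n-m) * stirling1 n (m+1) * y ^ (m+1))
          + (n:ℝ) * (lam ^ (n+1) * stirling1 n 0) := by
      rw [sum_range_succ' _ n]
      congr 1
      · refine sum_congr rfl fun m hm => ?_
        rw [mem_range] at hm
        have : n - (m+1) + 1 = n - m := by omega
        rw [this]
      · simp
    rw [e2]
    have e3 : ∑ m ∈ range (n+1),
        lam ^ (n-m) * (stirling1 n m - (n:ℝ) * stirling1 n (m+1)) * y ^ (m+1)
        = ∑ m ∈ range (n+1), lam ^ (n-m) * stirling1 n m * y ^ (m+1)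
          - ∑ m ∈ range n, (n:ℝ) * (lam ^ (n-m) * stirling1 n (m+1) * y ^ (m+1)) := by
      have h4 : ∀ m ∈ range (n+1),
          lam ^ (n-m) * (stirling1 n m - (n:ℝ) * stirling1 n (m+1)) * y ^ (m+1)
          = lam ^ (n-m) * stirling1 n m * y ^ (m+1)
            - (n:ℝ) * (lam ^ (n-m) * stirling1 n (m+1) * y ^ (m+1)) := by
        intro m _
        ring
      rw [sum_congr rfl h4, sum_sub_distrib]
      congr 1
      rw [sum_range_succ, stirling1_eq_zero (Nat.lt_succ_self n)]
      simp
    rw [e3]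
    ring

lemma key1 (lam : ℝ) (r k n : ℕ) :
    PowerSeries.coeff n (degExp lam r * (degExp lam 1 - 1) ^ k)
      = ∑ l ∈ range (k+1),
          (-1:ℝ) ^ (k-l) * (k.choose l) * (degFall ((l:ℝ) + r) lam n / n.factorial) := by
  rw [sub_pow, mul_sum, map_sum]
  refine sum_congr rfl fun l hl => ?_
  rw [mem_range, Nat.lt_succ_iff] at hl
  have h1 : degExp lam r * ((-1:PowerSeries ℝ) ^ (l+k) * (degExp lam 1) ^ l * 1 ^ (k-l)
        * ((k.choose l : ℕ) : PowerSeries ℝ))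
      = PowerSeries.C ((-1:ℝ) ^ (l+k) * (k.choose l : ℝ)) * degExp lam ((l:ℝ) + r) := by
    rw [degExp_pow, one_pow, mul_one]
    rw [show degExp lam r * ((-1:PowerSeries ℝ) ^ (l+k) * degExp lam l
          * ((k.choose l : ℕ) : PowerSeries ℝ))
        = ((-1:PowerSeries ℝ) ^ (l+k) * ((k.choose l : ℕ) : PowerSeries ℝ))
          * (degExp lam l * degExp lam r) by ring]
    rw [degExp_mul, map_mul, map_pow, map_neg, map_one, map_natCast]
  rw [h1, PowerSeries.coeff_C_mul]
  have hpar : (-1:ℝ) ^ (l+k) = (-1:ℝ) ^ (k-l) := by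
    rw [show l + k = (k - l) + 2*l by omega, pow_add, pow_mul]
    simp
  simp only [degExp, PowerSeries.coeff_mk]
  rw [hpar]

lemma main0 (lam : ℝ) (r : ℕ) (n : ℕ) (x : ℝ) :
    (n.factorial : ℝ) *
      PowerSeries.coeff n (degExp lam r * expComp (x • (degExp lam 1 - 1)))
    = ∑ k ∈ range (n+1), x ^ k / (k.factorial : ℝ) *
        ∑ l ∈ range (k+1), (k.choose l : ℝ) * (-1:ℝ)^(k-l) * degFall ((l:ℝ) + r) lam n := by
  have hf : PowerSeries.constantCoeff (x • (degExp lam 1 - 1)) = 0 := by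
    rw [← PowerSeries.coeff_zero_eq_constantCoeff_apply, map_smul, map_sub]
    simp [degExp, degFall]
  rw [coeff_mul_expComp _ hf, mul_sum]
  refine sum_congr rfl fun k _ => ?_
  rw [smul_pow, mul_smul_comm, map_smul, smul_eq_mul, key1]
  simp only [mul_sum, sum_div]
  refine sum_congr rfl fun l _ => ?_
  have h3 : (n.factorial : ℝ) ≠ 0 := Nat.cast_ne_zero.mpr n.factorial_ne_zero
  field_simp

theorem extDegBell_eq_sum_fwdDiff (lam : ℝ) (r : ℕ) (n : ℕ) (x : ℝ) :
    extDegBell lam r x n =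
      ∑ m ∈ Finset.range (n + 1), lam ^ (n - m) * stirling1 n m *
        ∑ k ∈ Finset.range (n + 1), x ^ k / (k.factorial : ℝ) *
          (∑ l ∈ Finset.range (k + 1),
            (k.choose l : ℝ) * (-1 : ℝ) ^ (k - l) * ((l : ℝ) + r) ^ m) := by
  rw [extDegBell, main0]
  calc ∑ k ∈ range (n+1), x ^ k / (k.factorial : ℝ) *
        ∑ l ∈ range (k+1), (k.choose l : ℝ) * (-1:ℝ)^(k-l) * degFall ((l:ℝ) + r) lam n
      = ∑ k ∈ range (n+1), ∑ l ∈ range (k+1), ∑ m ∈ range (n+1),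
          x ^ k / (k.factorial : ℝ) * ((k.choose l : ℝ) * (-1:ℝ)^(k-l)
            * (lam ^ (n-m) * stirling1 n m * ((l:ℝ) + r) ^ m)) := by
        refine sum_congr rfl fun k _ => ?_
        rw [mul_sum]
        refine sum_congr rfl fun l _ => ?_
        rw [degFall_eq_sum, mul_sum, mul_sum]
    _ = ∑ m ∈ range (n+1), ∑ k ∈ range (n+1), ∑ l ∈ range (k+1),
          x ^ k / (k.factorial : ℝ) * ((k.choose l : ℝ) * (-1:ℝ)^(k-l)
            * (lam ^ (n-m) * stirling1 n m * ((l:ℝ) + r) ^ m)) := by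
        have e : ∀ k ∈ range (n+1),
            (∑ l ∈ range (k+1), ∑ m ∈ range (n+1),
              x ^ k / (k.factorial : ℝ) * ((k.choose l : ℝ) * (-1:ℝ)^(k-l)
                * (lam ^ (n-m) * stirling1 n m * ((l:ℝ) + r) ^ m)))
            = ∑ m ∈ range (n+1), ∑ l ∈ range (k+1),
              x ^ k / (k.factorial : ℝ) * ((k.choose l : ℝ) * (-1:ℝ)^(k-l)
                * (lam ^ (n-m) * stirling1 n m * ((l:ℝ) + r) ^ m)) :=
          fun k _ => sum_comm
        rw [sum_congr rfl e, sum_comm]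
    _ = _ := by
        refine sum_congr rfl fun m _ => ?_
        rw [mul_sum]
        refine sum_congr rfl fun k _ => ?_
        rw [mul_sum, mul_sum]
        refine sum_congr rfl fun l _ => ?_
        ring
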